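/- Let Σ be a polynomial orbit-finite set, M an orbit-finite monoid, and h : Σ* → M an equivariant monoid homomorphism satisfying condition (*). Then there is an equivariant function f : Σ × Σ → Σ such that for every x, y ∈ Σ, the letter f(x,y) is a letter representation of h(x)·h(y): h(f(x,y)) = h(x)·h(y), and f(x,y) has the same least support as h(x)·h(y). -/

import Mathlib

/-- Atoms: a fixed countably infinite set. -/
abbrev Atom : Type := ℕ

/-- Atom automorphisms: bijections of the atoms. -/
abbrev AtomPerm : Type := Equiv.Perm Atom

/-- `x` (in a set with atoms `X`) is supported by the finite set `A` of atoms. -/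
def SupportedBy {X : Type*} [MulAction AtomPerm X] (A : Finset Atom) (x : X) : Prop :=
  ∀ π : AtomPerm, (∀ a ∈ A, π a = a) → π • x = x

def FinitelySupported {X : Type*} [MulAction AtomPerm X] (x : X) : Prop :=
  ∃ A : Finset Atom, SupportedBy A x

def IsLeastSupport {X : Type*} [MulAction AtomPerm X] (A : Finset Atom) (x : X) : Prop :=
  SupportedBy A x ∧ ∀ B : Finset Atom, SupportedBy B x → A ⊆ B

/-- A function `f : X → Y` is supported by `A` if `f (π • x) = π • f x`
for every `A`-automorphism `π`. -/
def FunSupportedBy {X Y : Type*} [MulAction AtomPerm X] [MulAction AtomPerm Y]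
    (A : Finset Atom) (f : X → Y) : Prop :=
  ∀ π : AtomPerm, (∀ a ∈ A, π a = a) → ∀ x : X, f (π • x) = π • f x

/-- A function is equivariant if it commutes with all atom automorphisms. -/
def FunEquivariant {X Y : Type*} [MulAction AtomPerm X] [MulAction AtomPerm Y]
    (f : X → Y) : Prop :=
  ∀ (π : AtomPerm) (x : X), f (π • x) = π • f x

/-- A subset `S` of a set with atoms is supported by `A`
(as an element of the powerset with the induced action). -/
def SetSupportedBy {Z : Type*} [MulAction AtomPerm Z] (A : Finset Atom) (S : Set Z) : Prop :=
  ∀ π : AtomPerm, (∀ a ∈ A, π a = a) → ∀ z : Z, z ∈ S ↔ π • z ∈ S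

/-- A set with atoms is orbit-finite if every element is finitely supported and, for some
finite set `A` of atoms, it is a union of finitely many orbits of the group of
`A`-automorphisms. -/
def OrbitFinite (X : Type*) [MulAction AtomPerm X] : Prop :=
  (∀ x : X, FinitelySupported x) ∧
  ∃ (A : Finset Atom) (reps : Finset X),
    ∀ x : X, ∃ r ∈ reps, ∃ π : AtomPerm, (∀ a ∈ A, π a = a) ∧ π • r = x

/-- The multiplication of a monoid with atoms is finitely supported. -/
def MulFinitelySupported (M : Type*) [Monoid M] [MulAction AtomPerm M] : Prop :=
  ∃ A : Finset Atom, ∀ π : AtomPerm, (∀ a ∈ A, π a = a) →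
    ∀ x y : M, π • (x * y) = (π • x) * (π • y)

/-- An orbit-finite monoid: the underlying set is orbit-finite and
multiplication is finitely supported. -/
def OrbitFiniteMonoid (M : Type*) [Monoid M] [MulAction AtomPerm M] : Prop :=
  OrbitFinite M ∧ MulFinitelySupported M

/-- `x` is an infix of `y`. -/
def MInfix {M : Type*} [Monoid M] (x y : M) : Prop := ∃ a b : M, y = a * x * b

/-- `x` is a prefix of `y`. -/
def MPrefix {M : Type*} [Monoid M] (x y : M) : Prop := ∃ a : M, y = x * a

/-- `x` is a suffix of `y`. -/
def MSuffix {M : Type*} [Monoid M] (x y : M) : Prop := ∃ a : M, y = a * x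

def JEquiv {M : Type*} [Monoid M] (x y : M) : Prop := MInfix x y ∧ MInfix y x
def REquiv {M : Type*} [Monoid M] (x y : M) : Prop := MPrefix x y ∧ MPrefix y x
def LEquiv {M : Type*} [Monoid M] (x y : M) : Prop := MSuffix x y ∧ MSuffix y x

/-- A sequence of monoid elements is smooth if every element of the sequence can be
recovered from the product of the whole sequence by multiplying on both sides. -/
def SmoothSeq {M : Type*} [Monoid M] (l : List M) : Prop :=
  ∀ x ∈ l, ∃ y z : M, y * l.prod * z = x

/-- Codes for polynomial orbit-finite sets: built from the atoms and singleton sets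
by finite products and coproducts. -/
inductive PolyCode : Type where
  | atom : PolyCode
  | unit : PolyCode
  | prod : PolyCode → PolyCode → PolyCode
  | sum : PolyCode → PolyCode → PolyCode

/-- The polynomial orbit-finite set described by a code. -/
def PolyCode.interp : PolyCode → Type
  | .atom => Atom
  | .unit => Unit
  | .prod c d => c.interp × d.interp
  | .sum c d => c.interp ⊕ d.interp

/-- The componentwise action of atom automorphisms on a polynomial orbit-finite set. -/
def PolyCode.act (π : AtomPerm) : (c : PolyCode) → c.interp → c.interp
  | .atom, a => π a
  | .unit, u => u
  | .prod c d, p => (c.act π p.1, d.act π p.2)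
  | .sum c d, x => x.elim (fun a => Sum.inl (c.act π a)) (fun b => Sum.inr (d.act π b))

theorem PolyCode.act_one : ∀ (c : PolyCode) (x : c.interp), c.act 1 x = x
  | .atom, a => rfl
  | .unit, _ => rfl
  | .prod c d, p => by
      simp only [PolyCode.act, PolyCode.act_one c p.1, PolyCode.act_one d p.2, Prod.mk.eta]; rfl
  | .sum c d, x => by
      cases x with
      | inl a => simp only [PolyCode.act, Sum.elim_inl, PolyCode.act_one c a]; exact congrArg Sum.inl (PolyCode.act_one c a)
      | inr b => simp only [PolyCode.act, Sum.elim_inr, PolyCode.act_one d b]; exact congrArg Sum.inr (PolyCode.act_one d b)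

theorem PolyCode.act_mul (π σ : AtomPerm) :
    ∀ (c : PolyCode) (x : c.interp), c.act (π * σ) x = c.act π (c.act σ x)
  | .atom, a => rfl
  | .unit, _ => rfl
  | .prod c d, p => by
      simp only [PolyCode.act, PolyCode.act_mul π σ c p.1, PolyCode.act_mul π σ d p.2]; rfl
  | .sum c d, x => by
      cases x with
      | inl a => simp only [PolyCode.act, Sum.elim_inl, PolyCode.act_mul π σ c a]; exact congrArg Sum.inl (PolyCode.act_mul π σ c a)
      | inr b => simp only [PolyCode.act, Sum.elim_inr, PolyCode.act_mul π σ d b]; exact congrArg Sum.inr (PolyCode.act_mul π σ d b)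

instance (c : PolyCode) : MulAction AtomPerm c.interp where
  smul π x := c.act π x
  one_smul x := c.act_one x
  mul_smul π σ x := c.act_mul π σ x

/-- `h : Σ* → M` is a monoid homomorphism from the free monoid of strings over `Σ`. -/
def IsListHom {X M : Type*} [Monoid M] (h : List X → M) : Prop :=
  h [] = 1 ∧ ∀ u v : List X, h (u ++ v) = h u * h v

/-- Equivariance of a function on strings, with the letterwise action on strings. -/
def ListHomEquivariant {X M : Type*} [MulAction AtomPerm X] [Monoid M] [MulAction AtomPerm M]
    (h : List X → M) : Prop :=
  ∀ (π : AtomPerm) (l : List X), h (l.map fun x => π • x) = π • h l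

/-- Condition (*): every monoid element has a letter representation, i.e. a letter with the
same image under `h` and the same least support. -/
def StarCondition (c : PolyCode) {M : Type*} [Monoid M] [MulAction AtomPerm M]
    (h : List c.interp → M) : Prop :=
  ∀ m : M, ∃ a : c.interp, h [a] = m ∧
    ∃ A : Finset Atom, IsLeastSupport A a ∧ IsLeastSupport A m


/-- The finite set of atoms occurring in an element of a polynomial set. -/
def PolyCode.atomsOf : (c : PolyCode) → c.interp → Finset Atom
  | .atom, a => {a}
  | .unit, _ => ∅
  | .prod c d, p => c.atomsOf p.1 ∪ d.atomsOf p.2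
  | .sum c d, x => x.elim c.atomsOf d.atomsOf

theorem PolyCode.act_of_fix (π : AtomPerm) :
    ∀ (c : PolyCode) (x : c.interp), (∀ a ∈ c.atomsOf x, π a = a) → c.act π x = x
  | .atom, a, hfix => hfix a (Finset.mem_singleton_self _)
  | .unit, _, _ => rfl
  | .prod c d, p, hfix => by
      have h1 := PolyCode.act_of_fix π c p.1
        (fun a ha => hfix a (by simp [PolyCode.atomsOf, ha]))
      have h2 := PolyCode.act_of_fix π d p.2
        (fun a ha => hfix a (by simp [PolyCode.atomsOf, ha]))
      simp only [PolyCode.act, h1, h2, Prod.mk.eta]; rfl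
  | .sum c d, x, hfix => by
      cases x with
      | inl a =>
          have := PolyCode.act_of_fix π c a (fun b hb => hfix b (by simpa [PolyCode.atomsOf]))
          simp only [PolyCode.act, Sum.elim_inl, this]; exact congrArg Sum.inl this
      | inr b =>
          have := PolyCode.act_of_fix π d b (fun b' hb => hfix b' (by simpa [PolyCode.atomsOf]))
          simp only [PolyCode.act, Sum.elim_inr, this]; exact congrArg Sum.inr this

theorem PolyCode.fix_of_act_eq (π : AtomPerm) :
    ∀ (c : PolyCode) (x : c.interp), c.act π x = x → ∀ a ∈ c.atomsOf x, π a = a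
  | .atom, a, hx, b, hb => by
      simp only [PolyCode.atomsOf, Finset.mem_singleton] at hb
      rw [Finset.mem_singleton.mp hb]; exact hx
  | .unit, _, _, b, hb => by simp [PolyCode.atomsOf] at hb
  | .prod c d, p, hx, b, hb => by
      simp only [PolyCode.atomsOf, Finset.mem_union] at hb
      have h1 : c.act π p.1 = p.1 := congrArg Prod.fst hx
      have h2 : d.act π p.2 = p.2 := congrArg Prod.snd hx
      rcases hb with hb | hb
      · exact PolyCode.fix_of_act_eq π c p.1 h1 b hb
      · exact PolyCode.fix_of_act_eq π d p.2 h2 b hb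
  | .sum c d, x, hx, b, hb => by
      cases x with
      | inl a =>
          simp only [PolyCode.atomsOf, Sum.elim_inl] at hb
          simp only [PolyCode.act, Sum.elim_inl] at hx
          exact PolyCode.fix_of_act_eq π c a (Sum.inl.inj hx) b hb
      | inr a =>
          simp only [PolyCode.atomsOf, Sum.elim_inr] at hb
          simp only [PolyCode.act, Sum.elim_inr] at hx
          exact PolyCode.fix_of_act_eq π d a (Sum.inr.inj hx) b hb

theorem IsLeastSupport.smul_image {X : Type*} [MulAction AtomPerm X] {A : Finset Atom} {x : X}
    (hA : IsLeastSupport A x) (π : AtomPerm) :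
    IsLeastSupport (A.image π) (π • x) := by
  constructor
  · intro σ hσ
    have hfix : ∀ a ∈ A, (π⁻¹ * σ * π) a = a := by
      intro a ha
      have : σ (π a) = π a := hσ (π a) (Finset.mem_image_of_mem π ha)
      simp [Equiv.Perm.mul_apply, this]
    have := hA.1 (π⁻¹ * σ * π) hfix
    calc σ • π • x = π • (π⁻¹ * σ * π) • x := by
          rw [← mul_smul, ← mul_smul]; congr 1; group
      _ = π • x := by rw [this]
  · intro B hB
    have hBsupp : SupportedBy (B.image (⇑π⁻¹)) x := by
      intro σ hσ
      have hfix : ∀ b ∈ B, (π * σ * π⁻¹) b = b := by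
        intro b hb
        have : σ (π⁻¹ b) = π⁻¹ b := hσ (π⁻¹ b) (Finset.mem_image_of_mem _ hb)
        rw [Equiv.Perm.mul_apply, Equiv.Perm.mul_apply, this, ← Equiv.Perm.mul_apply, mul_inv_cancel, Equiv.Perm.one_apply]
      have h1 := hB (π * σ * π⁻¹) hfix
      have h2 : (π * σ * π⁻¹) • π • x = π • σ • x := by
        rw [← mul_smul, ← mul_smul]; congr 1; group
      rw [h2] at h1
      exact smul_left_cancel π h1
    have hsub := hA.2 _ hBsupp
    intro a ha
    rcases Finset.mem_image.mp ha with ⟨b, hb, rfl⟩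
    rcases Finset.mem_image.mp (hsub hb) with ⟨b', hb', rfl⟩
    simpa using hb'

/-- The orbit equivalence relation on pairs of letters. -/
def orbitSetoid (c : PolyCode) : Setoid (c.interp × c.interp) where
  r z w := ∃ π : AtomPerm, π • w = z
  iseqv := ⟨fun z => ⟨1, one_smul _ _⟩,
    fun ⟨π, hπ⟩ => ⟨π⁻¹, by rw [← hπ, inv_smul_smul]⟩,
    fun ⟨π, hπ⟩ ⟨σ, hσ⟩ => ⟨π * σ, by rw [mul_smul, hσ, hπ]⟩⟩

/-- For an equivariant homomorphism `h : Σ* → M` into an orbit-finite monoid satisfying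
condition (*), there is an equivariant function `f : Σ × Σ → Σ` such that `f(x,y)` is a
letter representation of `h(x)·h(y)`. -/
theorem letter_representation_of_product (c : PolyCode)
    {M : Type*} [Monoid M] [MulAction AtomPerm M] (hM : OrbitFiniteMonoid M)
    (h : List c.interp → M) (hHom : IsListHom h) (hEqv : ListHomEquivariant h)
    (hStar : StarCondition c h) :
    ∃ f : c.interp × c.interp → c.interp,
      FunEquivariant f ∧
      ∀ x y : c.interp,
        h [f (x, y)] = h [x] * h [y] ∧
        ∃ A : Finset Atom, IsLeastSupport A (f (x, y)) ∧
          IsLeastSupport A (h [x] * h [y]) := by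
  classical
  -- choose a letter representation for each pair
  set g : c.interp × c.interp → c.interp := fun w => (hStar (h [w.1, w.2])).choose with hgdef
  have hg1 : ∀ w : c.interp × c.interp, h [g w] = h [w.1, w.2] :=
    fun w => (hStar (h [w.1, w.2])).choose_spec.1
  have hg2 : ∀ w : c.interp × c.interp,
      ∃ A : Finset Atom, IsLeastSupport A (g w) ∧ IsLeastSupport A (h [w.1, w.2]) :=
    fun w => (hStar (h [w.1, w.2])).choose_spec.2
  -- h [w.1, w.2] is supported by the atoms of w
  have hMsupp : ∀ w : c.interp × c.interp,
      SupportedBy (c.atomsOf w.1 ∪ c.atomsOf w.2) (h [w.1, w.2]) := by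
    intro w π hπ
    have h1 : π • w.1 = w.1 :=
      PolyCode.act_of_fix π c w.1 (fun a ha => hπ a (Finset.mem_union_left _ ha))
    have h2 : π • w.2 = w.2 :=
      PolyCode.act_of_fix π c w.2 (fun a ha => hπ a (Finset.mem_union_right _ ha))
    have := hEqv π [w.1, w.2]
    simp only [List.map, h1, h2] at this
    exact this.symm
  -- stabilizer of a pair fixes its chosen letter
  have hstab : ∀ (w : c.interp × c.interp) (τ : AtomPerm), τ • w = w → τ • g w = g w := by
    intro w τ hτ
    obtain ⟨A, hAa, hAm⟩ := hg2 w
    have hsub : A ⊆ c.atomsOf w.1 ∪ c.atomsOf w.2 := hAm.2 _ (hMsupp w)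
    have h1 : τ • w.1 = w.1 := congrArg Prod.fst hτ
    have h2 : τ • w.2 = w.2 := congrArg Prod.snd hτ
    have hfix : ∀ a ∈ A, τ a = a := by
      intro a ha
      rcases Finset.mem_union.mp (hsub ha) with ha' | ha'
      · exact PolyCode.fix_of_act_eq τ c w.1 h1 a ha'
      · exact PolyCode.fix_of_act_eq τ c w.2 h2 a ha'
    exact hAa.1 τ hfix
  -- orbit representatives
  set rep : c.interp × c.interp → c.interp × c.interp :=
    fun z => Quotient.out (s := orbitSetoid c) (Quotient.mk (orbitSetoid c) z) with hrepdef
  have hrep_orbit : ∀ z : c.interp × c.interp, ∃ π : AtomPerm, π • rep z = z := by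
    intro z
    have : (orbitSetoid c).r (rep z) z := Quotient.mk_out (s := orbitSetoid c) z
    obtain ⟨π, hπ⟩ := this
    exact ⟨π⁻¹, by rw [← hπ, inv_smul_smul]⟩
  have hrep_eq : ∀ (z : c.interp × c.interp) (σ : AtomPerm), rep (σ • z) = rep z := by
    intro z σ
    have : Quotient.mk (orbitSetoid c) (σ • z) = Quotient.mk (orbitSetoid c) z :=
      Quotient.sound ⟨σ, rfl⟩
    simp only [hrepdef, this]
  set pick : (z : c.interp × c.interp) → AtomPerm := fun z => (hrep_orbit z).choose with hpickdef
  have hpick : ∀ z, pick z • rep z = z := fun z => (hrep_orbit z).choose_spec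
  refine ⟨fun z => pick z • g (rep z), ?_, ?_⟩
  · -- equivariance
    intro σ z
    have hre : rep (σ • z) = rep z := hrep_eq z σ
    have hkey : (pick z)⁻¹ • σ⁻¹ • pick (σ • z) • rep z = rep z := by
      have h1 : pick (σ • z) • rep (σ • z) = σ • z := hpick (σ • z)
      rw [hre] at h1
      rw [h1, inv_smul_smul, inv_smul_eq_iff]
      exact (hpick z).symm
    have hτ : ((pick z)⁻¹ * σ⁻¹ * pick (σ • z)) • rep z = rep z := by
      rw [mul_smul, mul_smul]; exact hkey
    have := hstab (rep z) _ hτ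
    rw [mul_smul, mul_smul] at this
    have h2 : σ⁻¹ • pick (σ • z) • g (rep z) = pick z • g (rep z) := by
      have := congrArg (fun t => pick z • t) this
      simpa using this
    calc pick (σ • z) • g (rep (σ • z)) = pick (σ • z) • g (rep z) := by rw [hre]
      _ = σ • pick z • g (rep z) := by rw [← h2, smul_inv_smul]
  · -- representation properties
    intro x y
    set z : c.interp × c.interp := (x, y) with hzdef
    have hz1 : (pick z • rep z).1 = x := by rw [hpick z]
    have hz2 : (pick z • rep z).2 = y := by rw [hpick z]
    have hm : pick z • h [(rep z).1, (rep z).2] = h [x, y] := by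
      have := hEqv (pick z) [(rep z).1, (rep z).2]
      rw [← this]
      simp only [List.map]
      rw [show pick z • (rep z).1 = x from hz1, show pick z • (rep z).2 = y from hz2]
    have hprod : h [x, y] = h [x] * h [y] := by
      have := hHom.2 [x] [y]
      simpa using this
    constructor
    · have := hEqv (pick z) [g (rep z)]
      simp only [List.map] at this
      rw [this, hg1 (rep z), hm, hprod]
    · obtain ⟨A, hAa, hAm⟩ := hg2 (rep z)
      refine ⟨A.image (pick z), hAa.smul_image (pick z), ?_⟩
      have := hAm.smul_image (pick z)
      rwa [hm, hprod] at this
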